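/- Every nilpotent superconnected quandle is latin. -/

import Mathlib

/-- A left quasigroup: left multiplications are bijective. -/
class LQgrp (Q : Type*) where
  mul : Q → Q → Q
  ld : Q → Q → Q
  ld_mul : ∀ x y, ld x (mul x y) = y
  mul_ld : ∀ x y, mul x (ld x y) = y

namespace LQgrp

variable {Q : Type*} [LQgrp Q]

/-- Left multiplication as a permutation. -/
def LM (a : Q) : Equiv.Perm Q := ⟨mul a, ld a, ld_mul a, mul_ld a⟩

/-- The left multiplication group. -/
def LMlt (Q : Type*) [LQgrp Q] : Subgroup (Equiv.Perm Q) :=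
  Subgroup.closure (Set.range (LM : Q → Equiv.Perm Q))

/-- Subalgebras: subsets closed under both operations. -/
def IsSubalg (S : Set Q) : Prop :=
  (∀ a ∈ S, ∀ b ∈ S, mul a b ∈ S) ∧ (∀ a ∈ S, ∀ b ∈ S, ld a b ∈ S)

/-- The subalgebra generated by a set. -/
def Sg (X : Set Q) : Set Q := ⋂₀ {S | IsSubalg S ∧ X ⊆ S}

/-- A subset is connected if the group generated by its left translations
acts transitively on it. -/
def ConnectedSet (S : Set Q) : Prop :=
  ∀ a ∈ S, ∀ b ∈ S, ∃ h ∈ Subgroup.closure ((LM : Q → Equiv.Perm Q) '' S), h a = b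

/-- `Q` is connected if `LMlt Q` acts transitively. -/
def Connected (Q : Type*) [LQgrp Q] : Prop := ∀ a b : Q, ∃ h ∈ LMlt Q, h a = b

/-- `Q` is superconnected if every subalgebra is connected. -/
def Superconnected (Q : Type*) [LQgrp Q] : Prop :=
  ∀ S : Set Q, IsSubalg S → ConnectedSet S

/-- Faithfulness of a subalgebra: distinct elements have distinct left translations. -/
def FaithfulOn (S : Set Q) : Prop :=
  ∀ a ∈ S, ∀ b ∈ S, (∀ c ∈ S, mul a c = mul b c) → a = b

/-- `Q` is superfaithful if every subalgebra is faithful. -/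
def Superfaithful (Q : Type*) [LQgrp Q] : Prop :=
  ∀ S : Set Q, IsSubalg S → FaithfulOn S

/-- Latin: right multiplications are bijective. -/
def Latin (Q : Type*) [LQgrp Q] : Prop := ∀ a : Q, Function.Bijective (fun b => mul b a)

/-- The displacement group of a rack/quandle. -/
def Dis (Q : Type*) [LQgrp Q] : Subgroup (Equiv.Perm Q) :=
  Subgroup.closure {g : Equiv.Perm Q | ∃ a b : Q, g = LM a * (LM b)⁻¹}

end LQgrp

/-- A quandle: idempotent, left distributive left quasigroup. -/
class Qdl (Q : Type*) extends LQgrp Q where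
  idem : ∀ x : Q, mul x x = x
  ldist : ∀ x y z : Q, mul x (mul y z) = mul (mul x y) (mul x z)

/-- An involutory quandle. -/
class InvQdl (Q : Type*) extends Qdl Q where
  invol : ∀ x y : Q, mul x (mul x y) = y

open LQgrp

theorem Equiv.Perm.apply_inv_self {α : Type*} (f : Equiv.Perm α) (x : α) : f (f⁻¹ x) = x :=
  f.apply_symm_apply x

theorem Equiv.Perm.inv_apply_self {α : Type*} (f : Equiv.Perm α) (x : α) : f⁻¹ (f x) = x :=
  f.symm_apply_apply x

namespace S11

open Subgroup Equiv
open scoped commutatorElement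

variable {Q : Type*} [Qdl Q]

theorem LM_apply (a b : Q) : LM a b = LQgrp.mul a b := rfl

theorem LM_inv_apply (a b : Q) : (LM a)⁻¹ b = LQgrp.ld a b := rfl

theorem LM_self (a : Q) : LM a a = a := Qdl.idem a

theorem LM_inv_self (a : Q) : (LM a)⁻¹ a = a := by
  apply (LM a).injective
  rw [Equiv.Perm.apply_inv_self, LM_self]

theorem LM_conj (a b : Q) : LM (LQgrp.mul a b) = LM a * LM b * (LM a)⁻¹ := by
  ext z
  show LQgrp.mul (LQgrp.mul a b) z = LQgrp.mul a (LQgrp.mul b (LQgrp.ld a z))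
  rw [Qdl.ldist a b (LQgrp.ld a z), LQgrp.mul_ld]

theorem LM_conj' (a b : Q) : LM (LQgrp.ld a b) = (LM a)⁻¹ * LM b * LM a := by
  have h := LM_conj a (LQgrp.ld a b)
  rw [LQgrp.mul_ld] at h
  rw [h]; group

theorem LM_mem_LMlt (a : Q) : LM a ∈ LMlt Q :=
  Subgroup.subset_closure ⟨a, rfl⟩

theorem conj_LM {g : Equiv.Perm Q} (hg : g ∈ LMlt Q) :
    ∀ y : Q, g * LM y * g⁻¹ = LM (g y) := by
  induction hg using Subgroup.closure_induction with
  | mem x hx =>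
    obtain ⟨c, rfl⟩ := hx
    intro y
    rw [← LM_conj]
    rfl
  | one => intro y; simp
  | mul x y hx hy px py =>
    intro z
    have : x * y * LM z * (x * y)⁻¹ = x * (y * LM z * y⁻¹) * x⁻¹ := by group
    rw [this, py, px, Equiv.Perm.mul_apply]
  | inv x hx px =>
    intro y
    have h := px (x⁻¹ y)
    rw [Equiv.Perm.apply_inv_self] at h
    have : LM (x⁻¹ y) = x⁻¹ * LM y * x := by rw [← h]; group
    rw [this]; group

theorem gen_mem_Dis (a b : Q) : LM a * (LM b)⁻¹ ∈ Dis Q :=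
  Subgroup.subset_closure ⟨a, b, rfl⟩

theorem Dis_le_LMlt : Dis Q ≤ LMlt Q := by
  rw [Dis, Subgroup.closure_le]
  rintro g ⟨a, b, rfl⟩
  exact mul_mem (LM_mem_LMlt a) (inv_mem (LM_mem_LMlt b))

theorem conj_mem_Dis {g : Equiv.Perm Q} (hg : g ∈ LMlt Q) {d : Equiv.Perm Q}
    (hd : d ∈ Dis Q) : g * d * g⁻¹ ∈ Dis Q := by
  induction hd using Subgroup.closure_induction with
  | mem x hx =>
    obtain ⟨a, b, rfl⟩ := hx
    have : g * (LM a * (LM b)⁻¹) * g⁻¹ =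
        (g * LM a * g⁻¹) * (g * LM b * g⁻¹)⁻¹ := by group
    rw [this, conj_LM hg, conj_LM hg]
    exact gen_mem_Dis _ _
  | one => simpa using one_mem _
  | mul x y hx hy px py =>
    have : g * (x * y) * g⁻¹ = (g * x * g⁻¹) * (g * y * g⁻¹) := by group
    rw [this]; exact mul_mem px py
  | inv x hx px =>
    have : g * x⁻¹ * g⁻¹ = (g * x * g⁻¹)⁻¹ := by group
    rw [this]; exact inv_mem px

theorem exists_dis_apply {g : Equiv.Perm Q} (hg : g ∈ LMlt Q) :
    ∀ a : Q, ∃ d ∈ Dis Q, g a = d a := by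
  induction hg using Subgroup.closure_induction with
  | mem x hx =>
    obtain ⟨c, rfl⟩ := hx
    intro a
    refine ⟨LM c * (LM a)⁻¹, gen_mem_Dis c a, ?_⟩
    rw [Equiv.Perm.mul_apply, LM_inv_self]
  | one => exact fun a => ⟨1, one_mem _, rfl⟩
  | mul x y hx hy px py =>
    intro a
    obtain ⟨d2, hd2, e2⟩ := py a
    obtain ⟨d1, hd1, e1⟩ := px (d2 a)
    exact ⟨d1 * d2, mul_mem hd1 hd2, by
      rw [Equiv.Perm.mul_apply, Equiv.Perm.mul_apply, e2, e1]⟩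
  | inv x hx px =>
    intro a
    obtain ⟨d, hd, e⟩ := px (x⁻¹ a)
    refine ⟨d⁻¹, inv_mem hd, ?_⟩
    rw [Equiv.Perm.apply_inv_self] at e
    apply d.injective
    rw [Equiv.Perm.apply_inv_self, ← e]

theorem univ_subalg : IsSubalg (Set.univ : Set Q) :=
  ⟨fun _ _ _ _ => trivial, fun _ _ _ _ => trivial⟩

theorem trans_dis (hsc : Superconnected Q) (a b : Q) : ∃ d ∈ Dis Q, d a = b := by
  obtain ⟨h, hh, he⟩ := hsc Set.univ univ_subalg a trivial b trivial
  rw [Set.image_univ] at hh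
  obtain ⟨d, hd, e⟩ := exists_dis_apply hh a
  exact ⟨d, hd, by rw [← e, he]⟩


/-! ### The central congruence -/

def ZZ (Q : Type*) [Qdl Q] : Subgroup (Equiv.Perm Q) :=
  Dis Q ⊓ Subgroup.centralizer (Dis Q)

theorem ZZ_dis {z : Equiv.Perm Q} (hz : z ∈ ZZ Q) : z ∈ Dis Q :=
  (Subgroup.mem_inf.mp hz).1

theorem ZZ_mem_LMlt {z : Equiv.Perm Q} (hz : z ∈ ZZ Q) : z ∈ LMlt Q :=
  Dis_le_LMlt (ZZ_dis hz)

theorem zz_comm {u v : Equiv.Perm Q} (hu : u ∈ ZZ Q) (hv : v ∈ ZZ Q) :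
    u * v = v * u :=
  (Subgroup.mem_centralizer_iff.mp (Subgroup.mem_inf.mp hv).2) u (ZZ_dis hu)

theorem dis_zz_comm {d z : Equiv.Perm Q} (hd : d ∈ Dis Q) (hz : z ∈ ZZ Q) :
    d * z = z * d :=
  (Subgroup.mem_centralizer_iff.mp (Subgroup.mem_inf.mp hz).2) d hd

theorem ZZ_semiregular (hsc : Superconnected Q) {z : Equiv.Perm Q} (hz : z ∈ ZZ Q)
    {a : Q} (ha : z a = a) : z = 1 := by
  ext b
  obtain ⟨d, hd, rfl⟩ := trans_dis hsc a b
  show z (d a) = d a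
  have : (z * d) a = (d * z) a := by rw [dis_zz_comm hd hz]
  rw [Equiv.Perm.mul_apply, Equiv.Perm.mul_apply, ha] at this
  exact this

theorem conj_ZZ {g : Equiv.Perm Q} (hg : g ∈ LMlt Q) {z : Equiv.Perm Q}
    (hz : z ∈ ZZ Q) : g * z * g⁻¹ ∈ ZZ Q := by
  refine Subgroup.mem_inf.mpr ⟨conj_mem_Dis hg (ZZ_dis hz), ?_⟩
  rw [Subgroup.mem_centralizer_iff]
  intro d hd
  have hd' : g⁻¹ * d * g ∈ Dis Q := by
    have := conj_mem_Dis (inv_mem hg) hd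
    rwa [inv_inv] at this
  have hcomm : (g⁻¹ * d * g) * z = z * (g⁻¹ * d * g) := dis_zz_comm hd' hz
  calc d * (g * z * g⁻¹) = g * ((g⁻¹ * d * g) * z) * g⁻¹ := by group
    _ = g * (z * (g⁻¹ * d * g)) * g⁻¹ := by rw [hcomm]
    _ = (g * z * g⁻¹) * d := by group

theorem conj_ZZ' {g : Equiv.Perm Q} (hg : g ∈ LMlt Q) {z : Equiv.Perm Q}
    (hz : z ∈ ZZ Q) : g⁻¹ * z * g ∈ ZZ Q := by
  have := conj_ZZ (inv_mem hg) hz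
  rwa [inv_inv] at this

def zsetoid (Q : Type*) [Qdl Q] : Setoid Q where
  r a b := ∃ z ∈ ZZ Q, z a = b
  iseqv := by
    constructor
    · exact fun a => ⟨1, one_mem _, rfl⟩
    · rintro a b ⟨z, hz, rfl⟩
      exact ⟨z⁻¹, inv_mem hz, Equiv.Perm.inv_apply_self z a⟩
    · rintro a b c ⟨z, hz, rfl⟩ ⟨w, hw, rfl⟩
      exact ⟨w * z, mul_mem hw hz, rfl⟩

def QQ (Q : Type*) [Qdl Q] : Type _ := Quotient (zsetoid Q)

def pr : Q → QQ Q := Quotient.mk (zsetoid Q)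

theorem pr_surjective : Function.Surjective (pr : Q → QQ Q) := by
  intro q
  obtain ⟨a, ha⟩ := Quotient.exists_rep q
  exact ⟨a, ha⟩

theorem mul_respects : ∀ (a₁ b₁ a₂ b₂ : Q), (zsetoid Q).r a₁ b₁ → (zsetoid Q).r a₂ b₂ →
    (zsetoid Q).r (LQgrp.mul a₁ a₂) (LQgrp.mul b₁ b₂) := by
  rintro a₁ _ a₂ _ ⟨u, hu, rfl⟩ ⟨v, hv, rfl⟩
  refine ⟨u * (LM a₁ * (u⁻¹ * v) * (LM a₁)⁻¹),
    mul_mem hu (conj_ZZ (LM_mem_LMlt a₁) (mul_mem (inv_mem hu) hv)), ?_⟩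
  have h1 : LQgrp.mul (u a₁) (v a₂) = (u * LM a₁ * u⁻¹) (v a₂) := by
    rw [conj_LM (ZZ_mem_LMlt hu) a₁]; rfl
  rw [h1]
  show (u * (LM a₁ * (u⁻¹ * v) * (LM a₁)⁻¹)) (LM a₁ a₂) = _
  have : (u * (LM a₁ * (u⁻¹ * v) * (LM a₁)⁻¹)) * LM a₁ = (u * LM a₁ * u⁻¹) * v := by group
  calc (u * (LM a₁ * (u⁻¹ * v) * (LM a₁)⁻¹)) (LM a₁ a₂)
      = ((u * (LM a₁ * (u⁻¹ * v) * (LM a₁)⁻¹)) * LM a₁) a₂ := rfl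
    _ = ((u * LM a₁ * u⁻¹) * v) a₂ := by rw [this]
    _ = (u * LM a₁ * u⁻¹) (v a₂) := rfl

theorem ld_respects : ∀ (a₁ b₁ a₂ b₂ : Q), (zsetoid Q).r a₁ b₁ → (zsetoid Q).r a₂ b₂ →
    (zsetoid Q).r (LQgrp.ld a₁ a₂) (LQgrp.ld b₁ b₂) := by
  rintro a₁ _ a₂ _ ⟨u, hu, rfl⟩ ⟨v, hv, rfl⟩
  refine ⟨u * ((LM a₁)⁻¹ * (u⁻¹ * v) * LM a₁),
    mul_mem hu (conj_ZZ' (LM_mem_LMlt a₁) (mul_mem (inv_mem hu) hv)), ?_⟩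
  have h1 : LQgrp.ld (u a₁) (v a₂) = (u * (LM a₁)⁻¹ * u⁻¹) (v a₂) := by
    have h2 : LM (u a₁) = u * LM a₁ * u⁻¹ := (conj_LM (ZZ_mem_LMlt hu) a₁).symm
    have h3 : (LM (u a₁))⁻¹ = u * (LM a₁)⁻¹ * u⁻¹ := by rw [h2]; group
    rw [← LM_inv_apply, h3]
  rw [h1]
  show (u * ((LM a₁)⁻¹ * (u⁻¹ * v) * LM a₁)) ((LM a₁)⁻¹ a₂) = _
  have key : (u * ((LM a₁)⁻¹ * (u⁻¹ * v) * LM a₁)) * (LM a₁)⁻¹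
      = (u * (LM a₁)⁻¹ * u⁻¹) * v := by group
  calc (u * ((LM a₁)⁻¹ * (u⁻¹ * v) * LM a₁)) ((LM a₁)⁻¹ a₂)
      = ((u * ((LM a₁)⁻¹ * (u⁻¹ * v) * LM a₁)) * (LM a₁)⁻¹) a₂ := rfl
    _ = ((u * (LM a₁)⁻¹ * u⁻¹) * v) a₂ := by rw [key]
    _ = (u * (LM a₁)⁻¹ * u⁻¹) (v a₂) := rfl

instance : Qdl (QQ Q) where
  mul := Quotient.map₂ LQgrp.mul (fun a b hab c d hcd => mul_respects a b c d hab hcd)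
  ld := Quotient.map₂ LQgrp.ld (fun a b hab c d hcd => ld_respects a b c d hab hcd)
  ld_mul := by
    intro x y
    induction x using Quotient.ind
    induction y using Quotient.ind
    show pr (LQgrp.ld _ (LQgrp.mul _ _)) = pr _
    rw [LQgrp.ld_mul]
  mul_ld := by
    intro x y
    induction x using Quotient.ind
    induction y using Quotient.ind
    show pr (LQgrp.mul _ (LQgrp.ld _ _)) = pr _
    rw [LQgrp.mul_ld]
  idem := by
    intro x
    induction x using Quotient.ind
    show pr (LQgrp.mul _ _) = pr _
    rw [Qdl.idem]
  ldist := by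
    intro x y z
    induction x using Quotient.ind
    induction y using Quotient.ind
    induction z using Quotient.ind
    show pr (LQgrp.mul _ (LQgrp.mul _ _)) = pr (LQgrp.mul (LQgrp.mul _ _) (LQgrp.mul _ _))
    rw [Qdl.ldist]

theorem pr_mul (a b : Q) : LQgrp.mul (pr a) (pr b) = pr (LQgrp.mul a b) := rfl

theorem pr_ld (a b : Q) : LQgrp.ld (pr a) (pr b) = pr (LQgrp.ld a b) := rfl

theorem pr_LM (s a : Q) : LM (pr s) (pr a) = pr (LM s a) := rfl

theorem pr_LM_inv (s a : Q) : (LM (pr s))⁻¹ (pr a) = pr ((LM s)⁻¹ a) := rfl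


/-! ### Transfer to the quotient -/

theorem transfer {S : Set Q} {h : Equiv.Perm Q}
    (hh : h ∈ Subgroup.closure ((LM : Q → Equiv.Perm Q) '' S)) :
    ∃ h' ∈ Subgroup.closure ((LM : QQ Q → Equiv.Perm (QQ Q)) '' (pr '' S)),
      ∀ a : Q, h' (pr a) = pr (h a) := by
  induction hh using Subgroup.closure_induction with
  | mem x hx =>
    obtain ⟨s, hs, rfl⟩ := hx
    exact ⟨LM (pr s), Subgroup.subset_closure ⟨pr s, ⟨s, hs, rfl⟩, rfl⟩,
      fun a => pr_LM s a⟩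
  | one => exact ⟨1, one_mem _, fun a => rfl⟩
  | mul x y hx hy px py =>
    obtain ⟨x', hx', ex⟩ := px
    obtain ⟨y', hy', ey⟩ := py
    refine ⟨x' * y', mul_mem hx' hy', fun a => ?_⟩
    rw [Equiv.Perm.mul_apply, Equiv.Perm.mul_apply, ey, ex]
  | inv x hx px =>
    obtain ⟨x', hx', ex⟩ := px
    refine ⟨x'⁻¹, inv_mem hx', fun a => ?_⟩
    have : x' (pr (x⁻¹ a)) = pr a := by
      rw [ex, Equiv.Perm.apply_inv_self]
    rw [← this, Equiv.Perm.inv_apply_self]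

theorem transfer_dis {h : Equiv.Perm Q} (hh : h ∈ Dis Q) :
    ∃ h' ∈ Dis (QQ Q), ∀ a : Q, h' (pr a) = pr (h a) := by
  induction hh using Subgroup.closure_induction with
  | mem x hx =>
    obtain ⟨a, b, rfl⟩ := hx
    refine ⟨LM (pr a) * (LM (pr b))⁻¹, gen_mem_Dis _ _, fun c => ?_⟩
    rw [Equiv.Perm.mul_apply, Equiv.Perm.mul_apply, pr_LM_inv, pr_LM]
  | one => exact ⟨1, one_mem _, fun a => rfl⟩
  | mul x y hx hy px py =>
    obtain ⟨x', hx', ex⟩ := px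
    obtain ⟨y', hy', ey⟩ := py
    refine ⟨x' * y', mul_mem hx' hy', fun a => ?_⟩
    rw [Equiv.Perm.mul_apply, Equiv.Perm.mul_apply, ey, ex]
  | inv x hx px =>
    obtain ⟨x', hx', ex⟩ := px
    refine ⟨x'⁻¹, inv_mem hx', fun a => ?_⟩
    have : x' (pr (x⁻¹ a)) = pr a := by
      rw [ex, Equiv.Perm.apply_inv_self]
    rw [← this, Equiv.Perm.inv_apply_self]

theorem perm_ext_pr {h' h'' : Equiv.Perm (QQ Q)}
    (H : ∀ a : Q, h' (pr a) = h'' (pr a)) : h' = h'' := by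
  ext q
  induction q using Quotient.ind with
  | _ a => exact H a

noncomputable def theta : ↥(Dis Q) →* ↥(Dis (QQ Q)) :=
  MonoidHom.mk' (fun g => ⟨(transfer_dis g.2).choose, (transfer_dis g.2).choose_spec.1⟩)
    (by
      intro g h
      apply Subtype.ext
      apply perm_ext_pr
      intro a
      have sg := (transfer_dis g.2).choose_spec.2
      have sh := (transfer_dis h.2).choose_spec.2
      have sgh := (transfer_dis (g * h).2).choose_spec.2
      show (transfer_dis (g * h).2).choose (pr a) =
        ((transfer_dis g.2).choose * (transfer_dis h.2).choose) (pr a)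
      rw [sgh a, Equiv.Perm.mul_apply, sh a, sg]
      rfl)

theorem theta_spec (g : ↥(Dis Q)) (a : Q) :
    (theta g : Equiv.Perm (QQ Q)) (pr a) = pr (g.1 a) :=
  (transfer_dis g.2).choose_spec.2 a

theorem theta_surjective_aux :
    ∀ x : Equiv.Perm (QQ Q), x ∈ Dis (QQ Q) →
      ∃ g : ↥(Dis Q), (theta g : Equiv.Perm (QQ Q)) = x := by
  intro x hmem
  induction hmem using Subgroup.closure_induction with
    | mem x hx =>
      obtain ⟨aa, bb, rfl⟩ := hx
      obtain ⟨a, ha⟩ := pr_surjective aa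
      obtain ⟨b, hb⟩ := pr_surjective bb
      refine ⟨⟨LM a * (LM b)⁻¹, gen_mem_Dis a b⟩, ?_⟩
      apply perm_ext_pr
      intro c
      rw [theta_spec]
      show pr ((LM a * (LM b)⁻¹) c) = (LM aa * (LM bb)⁻¹) (pr c)
      rw [← ha, ← hb, Equiv.Perm.mul_apply, Equiv.Perm.mul_apply, pr_LM_inv, pr_LM]
    | one => exact ⟨1, by rw [map_one]; rfl⟩
    | mul x y hx hy px py =>
      obtain ⟨gx, ex⟩ := px
      obtain ⟨gy, ey⟩ := py
      refine ⟨gx * gy, ?_⟩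
      rw [map_mul]
      show (theta gx : Equiv.Perm (QQ Q)) * (theta gy : Equiv.Perm (QQ Q)) = x * y
      rw [ex, ey]
    | inv x hx px =>
      obtain ⟨gx, ex⟩ := px
      refine ⟨gx⁻¹, ?_⟩
      rw [map_inv]
      show (theta gx : Equiv.Perm (QQ Q))⁻¹ = x⁻¹
      rw [ex]

theorem theta_surjective : Function.Surjective (theta (Q := Q)) := by
  intro g'
  obtain ⟨g, hg⟩ := theta_surjective_aux g'.1 g'.2
  exact ⟨g, Subtype.ext hg⟩

theorem lcs_map_surj {G G' : Type*} [Group G] [Group G'] (f : G →* G')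
    (hf : Function.Surjective f) (n : ℕ) :
    Subgroup.map f ((⊤ : Subgroup G).lowerCentralSeries n) = (⊤ : Subgroup G').lowerCentralSeries n := by
  induction n with
  | zero =>
    rw [Subgroup.lowerCentralSeries_zero, Subgroup.lowerCentralSeries_zero]
    exact Subgroup.map_top_of_surjective f hf
  | succ n ih =>
    show Subgroup.map f ⁅(⊤ : Subgroup G).lowerCentralSeries n, ⊤⁆ = ⁅(⊤ : Subgroup G').lowerCentralSeries n, ⊤⁆
    rw [Subgroup.map_commutator, ih, Subgroup.map_top_of_surjective f hf]

theorem superconnected_QQ (hsc : Superconnected Q) : Superconnected (QQ Q) := by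
  intro Sb hSb aa haa bb hbb
  set S : Set Q := pr ⁻¹' Sb with hSdef
  have hS : IsSubalg S := by
    constructor
    · intro a ha b hb
      show pr (LQgrp.mul a b) ∈ Sb
      rw [← pr_mul]
      exact hSb.1 _ ha _ hb
    · intro a ha b hb
      show pr (LQgrp.ld a b) ∈ Sb
      rw [← pr_ld]
      exact hSb.2 _ ha _ hb
  obtain ⟨a, ha⟩ := pr_surjective aa
  obtain ⟨b, hb⟩ := pr_surjective bb
  have haS : a ∈ S := by show pr a ∈ Sb; rw [ha]; exact haa
  have hbS : b ∈ S := by show pr b ∈ Sb; rw [hb]; exact hbb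
  obtain ⟨h, hh, he⟩ := hsc S hS a haS b hbS
  obtain ⟨h', hh', he'⟩ := transfer hh
  refine ⟨h', ?_, by rw [← ha, he' a, he, hb]⟩
  refine Subgroup.closure_mono ?_ hh'
  apply Set.image_mono
  exact Set.image_preimage_subset pr Sb


/-! ### Surjectivity of `u ↦ u * (LM a * u⁻¹ * (LM a)⁻¹)` on the center -/

theorem psi_surj (hsc : Superconnected Q) {w : Equiv.Perm Q} (hw : w ∈ ZZ Q) (a : Q) :
    ∃ u ∈ ZZ Q, w = u * LM a * u⁻¹ * (LM a)⁻¹ := by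
  set A := LM a with hA
  have hAmem : A ∈ LMlt Q := LM_mem_LMlt a
  set B : Set Q := {b | ∃ z ∈ ZZ Q, z a = b} with hBdef
  have hAa : A a = a := by rw [hA]; exact LM_self a
  have hAia : A⁻¹ a = a := by rw [hA]; exact LM_inv_self a
  have hB : IsSubalg B := by
    constructor
    · rintro _ ⟨z1, hz1, rfl⟩ _ ⟨z2, hz2, rfl⟩
      refine ⟨z1 * (A * (z1⁻¹ * z2) * A⁻¹),
        mul_mem hz1 (conj_ZZ hAmem (mul_mem (inv_mem hz1) hz2)), ?_⟩
      have h1 : LQgrp.mul (z1 a) (z2 a) = (z1 * A * z1⁻¹) (z2 a) := by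
        rw [hA, conj_LM (ZZ_mem_LMlt hz1) a]; rfl
      rw [h1]
      have h2 : z1 * (A * (z1⁻¹ * z2) * A⁻¹) = ((z1 * A * z1⁻¹) * z2) * A⁻¹ := by group
      rw [h2]
      show ((z1 * A * z1⁻¹) * z2) (A⁻¹ a) = _
      rw [hA, LM_inv_self]
      rfl
    · rintro _ ⟨z1, hz1, rfl⟩ _ ⟨z2, hz2, rfl⟩
      refine ⟨z1 * (A⁻¹ * (z1⁻¹ * z2) * A),
        mul_mem hz1 (conj_ZZ' hAmem (mul_mem (inv_mem hz1) hz2)), ?_⟩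
      have h1 : LQgrp.ld (z1 a) (z2 a) = (z1 * A⁻¹ * z1⁻¹) (z2 a) := by
        have h2 : LM (z1 a) = z1 * A * z1⁻¹ := by
          rw [hA, conj_LM (ZZ_mem_LMlt hz1) a]
        have h3 : (LM (z1 a))⁻¹ = z1 * A⁻¹ * z1⁻¹ := by rw [h2]; group
        rw [← LM_inv_apply, h3]
      rw [h1]
      have h2 : z1 * (A⁻¹ * (z1⁻¹ * z2) * A) = ((z1 * A⁻¹ * z1⁻¹) * z2) * A := by group
      rw [h2]
      show ((z1 * A⁻¹ * z1⁻¹) * z2) (A a) = _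
      rw [hA, LM_self]
      rfl
  have haB : a ∈ B := ⟨1, one_mem _, rfl⟩
  have hwB : w a ∈ B := ⟨w, hw, rfl⟩
  obtain ⟨h, hh, he⟩ := hsc B hB a haB (w a) hwB
  have claim : ∀ g ∈ Subgroup.closure ((LM : Q → Equiv.Perm Q) '' B),
      (∀ u ∈ ZZ Q, ∃ u' ∈ ZZ Q,
        g ((u * A * u⁻¹ * A⁻¹) a) = (u' * A * u'⁻¹ * A⁻¹) a) ∧
      (∀ u ∈ ZZ Q, ∃ u' ∈ ZZ Q,
        g⁻¹ ((u * A * u⁻¹ * A⁻¹) a) = (u' * A * u'⁻¹ * A⁻¹) a) := by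
    intro g hg
    induction hg using Subgroup.closure_induction with
    | mem x hx =>
      obtain ⟨s, hsB, rfl⟩ := hx
      obtain ⟨v, hv, hva⟩ := hsB
      have hs : LM s = v * A * v⁻¹ := by
        rw [← hva, hA, conj_LM (ZZ_mem_LMlt hv) a]
      have hsinv : (LM s)⁻¹ = v * A⁻¹ * v⁻¹ := by rw [hs]; group
      constructor
      · intro u hu
        refine ⟨v * (A * u * A⁻¹),
          mul_mem hv (conj_ZZ hAmem hu), ?_⟩
        have hcz : A * u⁻¹ * A⁻¹ ∈ ZZ Q := conj_ZZ hAmem (inv_mem hu)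
        have h1 : v⁻¹ * u = u * v⁻¹ := zz_comm (inv_mem hv) hu
        have h2 : v⁻¹ * (A * u⁻¹ * A⁻¹) = (A * u⁻¹ * A⁻¹) * v⁻¹ :=
          zz_comm (inv_mem hv) hcz
        have E : (v * A * v⁻¹) * (u * A * u⁻¹ * A⁻¹) =
            ((v * (A * u * A⁻¹)) * A * (v * (A * u * A⁻¹))⁻¹ * A⁻¹) * A := by
          calc (v * A * v⁻¹) * (u * A * u⁻¹ * A⁻¹)
              = v * A * ((v⁻¹ * u) * (A * u⁻¹ * A⁻¹)) := by group
            _ = v * A * ((u * v⁻¹) * (A * u⁻¹ * A⁻¹)) := by rw [h1]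
            _ = v * A * (u * (v⁻¹ * (A * u⁻¹ * A⁻¹))) := by group
            _ = v * A * (u * ((A * u⁻¹ * A⁻¹) * v⁻¹)) := by rw [h2]
            _ = ((v * (A * u * A⁻¹)) * A * (v * (A * u * A⁻¹))⁻¹ * A⁻¹) * A := by group
        have happ := congrArg (fun p : Equiv.Perm Q => p a) E
        rw [hs]
        simp only [Equiv.Perm.mul_apply, hAia, hAa] at happ ⊢
        exact happ
      · intro u hu
        refine ⟨A⁻¹ * (v⁻¹ * u) * A,
          conj_ZZ' hAmem (mul_mem (inv_mem hv) hu), ?_⟩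
        have ht : A⁻¹ * (v⁻¹ * u) * A ∈ ZZ Q := conj_ZZ' hAmem (mul_mem (inv_mem hv) hu)
        have hvt : v * (A⁻¹ * (v⁻¹ * u) * A) = (A⁻¹ * (v⁻¹ * u) * A) * v :=
          zz_comm hv ht
        have hvu : v * u⁻¹ = u⁻¹ * v := zz_comm hv (inv_mem hu)
        have E : (v * A⁻¹ * v⁻¹) * (u * A * u⁻¹ * A⁻¹) =
            ((A⁻¹ * (v⁻¹ * u) * A) * A * (A⁻¹ * (v⁻¹ * u) * A)⁻¹ * A⁻¹) * A⁻¹ := by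
          calc (v * A⁻¹ * v⁻¹) * (u * A * u⁻¹ * A⁻¹)
              = (v * (A⁻¹ * (v⁻¹ * u) * A)) * (u⁻¹ * A⁻¹) := by group
            _ = ((A⁻¹ * (v⁻¹ * u) * A) * v) * (u⁻¹ * A⁻¹) := by rw [hvt]
            _ = (A⁻¹ * (v⁻¹ * u) * A) * ((v * u⁻¹) * A⁻¹) := by group
            _ = (A⁻¹ * (v⁻¹ * u) * A) * ((u⁻¹ * v) * A⁻¹) := by rw [hvu]
            _ = ((A⁻¹ * (v⁻¹ * u) * A) * A * (A⁻¹ * (v⁻¹ * u) * A)⁻¹ * A⁻¹) * A⁻¹ := by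
                group
        have happ := congrArg (fun p : Equiv.Perm Q => p a) E
        rw [hsinv]
        simp only [Equiv.Perm.mul_apply, hAia, hAa] at happ ⊢
        exact happ
    | one =>
      refine ⟨fun u hu => ⟨u, hu, rfl⟩, fun u hu => ⟨u, hu, ?_⟩⟩
      rw [inv_one]; rfl
    | mul x y hx hy px py =>
      constructor
      · intro u hu
        obtain ⟨u2, hu2, e2⟩ := py.1 u hu
        obtain ⟨u3, hu3, e3⟩ := px.1 u2 hu2
        exact ⟨u3, hu3, by rw [Equiv.Perm.mul_apply, e2, e3]⟩
      · intro u hu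
        obtain ⟨u2, hu2, e2⟩ := px.2 u hu
        obtain ⟨u3, hu3, e3⟩ := py.2 u2 hu2
        refine ⟨u3, hu3, ?_⟩
        rw [mul_inv_rev, Equiv.Perm.mul_apply, e2, e3]
    | inv x hx px =>
      refine ⟨px.2, ?_⟩
      intro u hu
      obtain ⟨u', hu', e⟩ := px.1 u hu
      exact ⟨u', hu', by rw [inv_inv]; exact e⟩
  have h1Z : (1 : Equiv.Perm Q) ∈ ZZ Q := one_mem _
  obtain ⟨u', hu', he2⟩ := (claim h hh).1 1 h1Z
  have hid : ((1 : Equiv.Perm Q) * A * 1⁻¹ * A⁻¹) a = a := by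
    have : (1 : Equiv.Perm Q) * A * 1⁻¹ * A⁻¹ = 1 := by group
    rw [this]; rfl
  rw [hid, he] at he2
  -- he2 : w a = (u' * A * u'⁻¹ * A⁻¹) a
  have hpsiZ : u' * A * u'⁻¹ * A⁻¹ ∈ ZZ Q := by
    have : u' * A * u'⁻¹ * A⁻¹ = u' * (A * u'⁻¹ * A⁻¹) := by group
    rw [this]
    exact mul_mem hu' (conj_ZZ hAmem (inv_mem hu'))
  have hzfix : ((u' * A * u'⁻¹ * A⁻¹)⁻¹ * w) a = a := by
    rw [Equiv.Perm.mul_apply, he2, Equiv.Perm.inv_apply_self]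
  have hz1 : (u' * A * u'⁻¹ * A⁻¹)⁻¹ * w = 1 :=
    ZZ_semiregular hsc (mul_mem (inv_mem hpsiZ) hw) hzfix
  exact ⟨u', hu', (inv_mul_eq_one.mp hz1).symm⟩


/-! ### Main induction -/

universe u

theorem fix_of_closure {T : Set Q} {x : Q} (hT : ∀ s ∈ T, LM s x = x) :
    ∀ g ∈ Subgroup.closure ((LM : Q → Equiv.Perm Q) '' T), g x = x := by
  intro g hg
  induction hg using Subgroup.closure_induction with
  | mem y hy => obtain ⟨s, hs, rfl⟩ := hy; exact hT s hs
  | one => rfl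
  | mul p q hp hq pp pq => rw [Equiv.Perm.mul_apply, pq, pp]
  | inv p hp pp =>
    apply p.injective
    rw [Equiv.Perm.apply_inv_self, pp]

theorem aux : ∀ (n : ℕ) (Q : Type u) [Qdl Q], Superconnected Q →
    (⊤ : Subgroup ↥(Dis Q)).lowerCentralSeries n = ⊥ → Latin Q := by
  intro n
  induction n with
  | zero =>
    intro Q _ hsc hbot
    have hdis : ∀ g ∈ Dis Q, g = 1 := by
      intro g hg
      have hmem : (⟨g, hg⟩ : ↥(Dis Q)) ∈ (⊤ : Subgroup ↥(Dis Q)).lowerCentralSeries 0 :=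
        Subgroup.mem_top _
      rw [hbot, Subgroup.mem_bot] at hmem
      exact congrArg Subtype.val hmem
    have hL : ∀ a b : Q, LM a = LM b := by
      intro a b
      have := hdis _ (gen_mem_Dis a b)
      rwa [mul_inv_eq_one] at this
    have hall : ∀ a b : Q, a = b := by
      intro a b
      have hsub : IsSubalg ({a, b} : Set Q) := by
        constructor
        · intro x _ y hy
          have hxy : LQgrp.mul x y = y := by
            rw [← LM_apply, hL x y, LM_self]
          rw [hxy]; exact hy
        · intro x _ y hy
          have hxy : LQgrp.ld x y = y := by
            rw [← LM_inv_apply, hL x y, LM_inv_self]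
          rw [hxy]; exact hy
      obtain ⟨h, hh, he⟩ := hsc {a, b} hsub a (Or.inl rfl) b (Or.inr rfl)
      have hfix := fix_of_closure (T := ({a, b} : Set Q)) (x := a)
        (fun s _ => by rw [hL s a, LM_self]) h hh
      rw [← he, hfix]
    intro c
    constructor
    · intro x y _
      exact hall x y
    · intro b
      exact ⟨b, hall _ _⟩
  | succ n IH =>
    intro Q _ hsc hbot
    have hsc' : Superconnected (QQ Q) := superconnected_QQ hsc
    have hker : (⊤ : Subgroup ↥(Dis Q)).lowerCentralSeries n ≤ (theta (Q := Q)).ker := by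
      intro x hx
      have hcomm : ∀ y : ↥(Dis Q), x * y = y * x := by
        intro y
        have h1 : ⁅x, y⁆ ∈ (⊤ : Subgroup ↥(Dis Q)).lowerCentralSeries (n + 1) :=
          Subgroup.commutator_mem_commutator hx (Subgroup.mem_top y)
        rw [hbot, Subgroup.mem_bot] at h1
        exact commutatorElement_eq_one_iff_mul_comm.mp h1
      have hxZZ : x.1 ∈ ZZ Q := by
        refine Subgroup.mem_inf.mpr ⟨x.2, ?_⟩
        rw [Subgroup.mem_centralizer_iff]
        intro d hd
        exact (congrArg Subtype.val (hcomm ⟨d, hd⟩)).symm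
      rw [MonoidHom.mem_ker]
      apply Subtype.ext
      apply perm_ext_pr
      intro a
      rw [theta_spec]
      show pr (x.1 a) = pr a
      exact Quotient.sound ⟨x.1⁻¹, inv_mem hxZZ, Equiv.Perm.inv_apply_self x.1 a⟩
    have hbot' : (⊤ : Subgroup ↥(Dis (QQ Q))).lowerCentralSeries n = ⊥ := by
      rw [← lcs_map_surj theta theta_surjective n]
      exact (Subgroup.map_eq_bot_iff _).mpr hker
    have hlatin' : Latin (QQ Q) := IH (QQ Q) hsc' hbot'
    intro c
    constructor
    · -- injectivity
      intro x y hxy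
      have hxy' : LQgrp.mul x c = LQgrp.mul y c := hxy
      have hq : LQgrp.mul (pr x) (pr c) = LQgrp.mul (pr y) (pr c) := by
        rw [pr_mul, pr_mul, hxy']
      have hpr : pr x = pr y := (hlatin' (pr c)).1 hq
      obtain ⟨u, hu, hux⟩ := Quotient.exact hpr
      -- the element z fixes x * c
      have hzZZ : u * (LM x * u⁻¹ * (LM x)⁻¹) ∈ ZZ Q :=
        mul_mem hu (conj_ZZ (LM_mem_LMlt x) (inv_mem hu))
      have hzfix : (u * (LM x * u⁻¹ * (LM x)⁻¹)) (LM x c) = LM x c := by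
        have hstep : (u * (LM x * u⁻¹ * (LM x)⁻¹)) * LM x = u * LM x * u⁻¹ := by group
        have h1 : (u * (LM x * u⁻¹ * (LM x)⁻¹)) (LM x c)
            = ((u * (LM x * u⁻¹ * (LM x)⁻¹)) * LM x) c := rfl
        rw [h1, hstep, conj_LM (ZZ_mem_LMlt hu) x, hux]
        exact (congrArg (fun t => LM t c) rfl).trans hxy'.symm
      have hz1 : u * (LM x * u⁻¹ * (LM x)⁻¹) = 1 :=
        ZZ_semiregular hsc hzZZ hzfix
      have hLMxy : LM y = LM x := by
        have h2 : u * LM x * u⁻¹ = LM x := by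
          have h3 : u * (LM x * u⁻¹ * (LM x)⁻¹) * LM x = 1 * LM x := by rw [hz1]
          calc u * LM x * u⁻¹ = u * (LM x * u⁻¹ * (LM x)⁻¹) * LM x := by group
            _ = 1 * LM x := h3
            _ = LM x := one_mul _
        rw [← hux, ← conj_LM (ZZ_mem_LMlt hu) x, h2]
      -- the subalgebra of elements whose translation fixes x
      set T : Set Q := {s | LM s x = x} with hTdef
      have hTinv : ∀ s ∈ T, (LM s)⁻¹ x = x := by
        intro s hs
        apply (LM s).injective
        rw [Equiv.Perm.apply_inv_self]
        exact hs.symm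
      have hT : IsSubalg T := by
        constructor
        · intro s hs t ht
          show LM (LQgrp.mul s t) x = x
          rw [LM_conj]
          show LM s (LM t ((LM s)⁻¹ x)) = x
          rw [hTinv s hs, ht, hs]
        · intro s hs t ht
          show LM (LQgrp.ld s t) x = x
          rw [LM_conj']
          show (LM s)⁻¹ (LM t (LM s x)) = x
          rw [hs, ht, hTinv s hs]
      have hxT : x ∈ T := LM_self x
      have hyT : y ∈ T := by
        show LM y x = x
        rw [hLMxy]; exact LM_self x
      obtain ⟨h, hh, he⟩ := hsc T hT x hxT y hyT
      have := fix_of_closure (T := T) (x := x) (fun s hs => hs) h hh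
      rw [this] at he
      exact he
    · -- surjectivity
      intro b
      obtain ⟨xb, hxb⟩ := (hlatin' (pr c)).2 (pr b)
      obtain ⟨x₀, hx0⟩ := pr_surjective xb
      have hxb' : LQgrp.mul (pr x₀) (pr c) = pr b := by rw [hx0]; exact hxb
      have hmk : pr (LQgrp.mul x₀ c) = pr b := by rw [← pr_mul, hxb']
      obtain ⟨w, hw, hwe⟩ := Quotient.exact hmk
      obtain ⟨u, hu, hpsi⟩ := psi_surj hsc hw x₀
      refine ⟨u x₀, ?_⟩
      show LQgrp.mul (u x₀) c = b
      rw [← LM_apply, ← conj_LM (ZZ_mem_LMlt hu) x₀]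
      have hc' : (u * LM x₀ * u⁻¹) c = w (LQgrp.mul x₀ c) := by
        rw [hpsi]
        show _ = (u * LM x₀ * u⁻¹ * (LM x₀)⁻¹) (LM x₀ c)
        rw [← Equiv.Perm.mul_apply]
        congr 1
        group
      rw [hc', hwe]

end S11

/-- every nilpotent superconnected quandle is latin
(nilpotence of a quandle is equivalent to nilpotence of its displacement group). -/
theorem stmt11 {Q : Type*} [Qdl Q] (hsc : Superconnected Q)
    (hnil : Group.IsNilpotent ↥(Dis Q)) : Latin Q := by
  obtain ⟨n, hn⟩ := nilpotent_iff_lowerCentralSeries.mp hnil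
  exact S11.aux n Q hsc hn
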